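/- Let X₁ be uniform on [0..k−1] and U uniform on {0,1}, independent, and X₂ with |support(X₂)| ≤ k satisfying H(U | X₁, X₂) = H(X₂ | X₁, U) = H(X₁ | X₂, U) = 0. Then the characteristic bipartite graph of (X₁, X₂) — with left vertices support(X₁), right vertices support(X₂), and an edge (x₁,x₂) whenever P(X₁=x₁, X₂=x₂) > 0 — has every vertex of degree exactly 2, and the pair (X₁,X₂) is uniformly distributed over the edge set. -/

import Mathlib

open MeasureTheory ENNReal

/-- Shannon entropy (in nats) of a finitely-valued random variable. -/
noncomputable def ent {Ω α : Type*} [MeasurableSpace Ω] [Fintype α]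
    (μ : Measure Ω) (X : Ω → α) : ℝ :=
  ∑ a : α, Real.negMulLog ((μ (X ⁻¹' {a})).toReal)

/-- Conditional Shannon entropy H(X | Y) = H(X, Y) - H(Y). -/
noncomputable def condEnt {Ω α β : Type*} [MeasurableSpace Ω] [Fintype α] [Fintype β]
    (μ : Measure Ω) (X : Ω → α) (Y : Ω → β) : ℝ :=
  ent μ (fun ω => (X ω, Y ω)) - ent μ Y


lemma aux_le (c q : ℝ) (h0 : 0 ≤ q) (hq : q ≤ c) :
    (-Real.log c) * q ≤ Real.negMulLog q := by
  rcases h0.eq_or_lt with h | h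
  · simp [← h, Real.negMulLog]
  · have hl : Real.log q ≤ Real.log c := Real.log_le_log h hq
    unfold Real.negMulLog; nlinarith

lemma aux_ge (c q : ℝ) (hc : 0 < c) (h : q = 0 ∨ c ≤ q) :
    Real.negMulLog q ≤ (-Real.log c) * q := by
  rcases h with h | h
  · simp [h, Real.negMulLog]
  · have h0 : 0 < q := lt_of_lt_of_le hc h
    have hl : Real.log c ≤ Real.log q := Real.log_le_log hc h
    unfold Real.negMulLog; nlinarith

lemma aux_eq (c q : ℝ) (hc : 0 < c) (h0 : 0 ≤ q)
    (h : Real.negMulLog q = (-Real.log c) * q) : q = 0 ∨ q = c := by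
  rcases h0.eq_or_lt with h' | h'
  · exact Or.inl h'.symm
  · right
    unfold Real.negMulLog at h
    have h2 : q * (Real.log q - Real.log c) = 0 := by linear_combination -h
    rcases mul_eq_zero.mp h2 with h3 | h3
    · exact absurd h3 (ne_of_gt h')
    · have hlog : Real.log q = Real.log c := by linarith
      calc q = Real.exp (Real.log q) := (Real.exp_log h').symm
        _ = Real.exp (Real.log c) := by rw [hlog]
        _ = c := Real.exp_log hc

lemma sum_zmod2 {M : Type*} [AddCommMonoid M] (g : ZMod 2 → M) :
    ∑ u : ZMod 2, g u = g 0 + g 1 := by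
  rw [show (Finset.univ : Finset (ZMod 2)) = {0, 1} from by decide]
  simp [Finset.sum_pair (show (0 : ZMod 2) ≠ 1 from by decide)]

lemma pair_preimage {Ω A B : Type*} (f : Ω → A) (g : Ω → B) (a : A) (b : B) :
    (fun ω => (f ω, g ω)) ⁻¹' {(a, b)} = {ω | f ω = a ∧ g ω = b} := by
  ext ω; simp [Prod.ext_iff]

lemma sum2_zero {α γ : Type*} [Fintype α] [Fintype γ] (g : α → γ → ℝ)
    (h0 : ∀ a b, 0 ≤ g a b) (h : ∑ a, ∑ b, g a b = 0) : ∀ a b, g a b = 0 := by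
  intro a b
  have h1 := (Finset.sum_eq_zero_iff_of_nonneg
    (fun a _ => Finset.sum_nonneg fun b _ => h0 a b)).mp h a (Finset.mem_univ a)
  exact (Finset.sum_eq_zero_iff_of_nonneg (fun b _ => h0 a b)).mp h1 b (Finset.mem_univ b)

lemma sum3_zero {α γ δ : Type*} [Fintype α] [Fintype γ] [Fintype δ] (g : α → γ → δ → ℝ)
    (h0 : ∀ a b c, 0 ≤ g a b c) (h : ∑ a, ∑ b, ∑ c, g a b c = 0) : ∀ a b c, g a b c = 0 := by
  intro a b c
  have h1 := sum2_zero (fun a b => ∑ c, g a b c)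
    (fun a b => Finset.sum_nonneg fun c _ => h0 a b c) h a b
  exact (Finset.sum_eq_zero_iff_of_nonneg (fun c _ => h0 a b c)).mp h1 c (Finset.mem_univ c)

set_option maxHeartbeats 2000000 in
/-- the characteristic bipartite graph of `(X₁, X₂)` is
2-regular, and `(X₁, X₂)` is uniform over its edge set. -/
theorem stmt14 {Ω β : Type*} [MeasurableSpace Ω] (μ : Measure Ω) [IsProbabilityMeasure μ]
    [Fintype β] (k : ℕ) (hk : 0 < k) (X₁ : Ω → Fin k) (U : Ω → ZMod 2) (X₂ : Ω → β)
    (hX₁U : ∀ (x : Fin k) (u : ZMod 2),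
      μ {ω | X₁ ω = x ∧ U ω = u} = ((2 * k : ℕ) : ℝ≥0∞)⁻¹)
    (hsupp : Set.ncard {z : β | μ (X₂ ⁻¹' {z}) ≠ 0} ≤ k)
    (h1 : condEnt μ U (fun ω => (X₁ ω, X₂ ω)) = 0)
    (h2 : condEnt μ X₂ (fun ω => (X₁ ω, U ω)) = 0)
    (h3 : condEnt μ X₁ (fun ω => (X₂ ω, U ω)) = 0) :
    (∀ x : Fin k, Set.ncard {z : β | μ {ω | X₁ ω = x ∧ X₂ ω = z} ≠ 0} = 2) ∧
    (∀ z : β, μ (X₂ ⁻¹' {z}) ≠ 0 →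
      Set.ncard {x : Fin k | μ {ω | X₁ ω = x ∧ X₂ ω = z} ≠ 0} = 2) ∧
    (∀ (x : Fin k) (z : β), μ {ω | X₁ ω = x ∧ X₂ ω = z} ≠ 0 →
      μ {ω | X₁ ω = x ∧ X₂ ω = z} = ((2 * k : ℕ) : ℝ≥0∞)⁻¹) := by
  classical
  -- Constants
  have hk2 : (1 : ℝ) < ((2 * k : ℕ) : ℝ) := by
    have : 2 ≤ 2 * k := by omega
    exact_mod_cast Nat.lt_of_lt_of_le Nat.one_lt_two this
  set c : ℝ := ((2 * k : ℕ) : ℝ)⁻¹ with hcdef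
  have hc : 0 < c := by rw [hcdef]; positivity
  set L : ℝ := -Real.log c with hLdef
  have hL : 0 < L := by
    rw [hLdef, hcdef, Real.log_inv, neg_neg]
    exact Real.log_pos hk2
  set cE : ℝ≥0∞ := ((2 * k : ℕ) : ℝ≥0∞)⁻¹ with hcEdef
  have h2k0 : ((2 * k : ℕ) : ℝ≥0∞) ≠ 0 := by
    exact Nat.cast_ne_zero.mpr (by omega)
  have hcE_top : cE ≠ ⊤ := by
    rw [hcEdef]
    exact ENNReal.inv_ne_top.mpr h2k0
  have hcE_toReal : cE.toReal = c := by
    rw [hcEdef, hcdef, ENNReal.toReal_inv]; norm_num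
  have h2kc : (k : ℝ) * (2 * c) = 1 := by
    rw [hcdef]
    have h2k : ((2 * k : ℕ) : ℝ) = 2 * (k : ℝ) := by push_cast; ring
    rw [h2k]
    field_simp
  have hnmc : Real.negMulLog c = c * L := by
    rw [Real.negMulLog, hLdef]; ring
  -- p: measure of the triple cells
  set p : Fin k → ZMod 2 → β → ℝ :=
    fun x u z => (μ {ω | X₁ ω = x ∧ U ω = u ∧ X₂ ω = z}).toReal with hpdef
  have hp0 : ∀ x u z, 0 ≤ p x u z := fun x u z => ENNReal.toReal_nonneg
  have hpc : ∀ x u z, p x u z ≤ c := by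
    intro x u z
    rw [hpdef, ← hcE_toReal]
    refine ENNReal.toReal_mono hcE_top ?_
    rw [← hX₁U x u]
    exact measure_mono (fun ω hω => ⟨hω.1, hω.2.1⟩)
  have hplow : ∀ x u, c ≤ ∑ z, p x u z := by
    intro x u
    have hcover : {ω | X₁ ω = x ∧ U ω = u} ⊆ ⋃ z, {ω | X₁ ω = x ∧ U ω = u ∧ X₂ ω = z} := by
      intro ω hω
      exact Set.mem_iUnion.mpr ⟨X₂ ω, hω.1, hω.2, rfl⟩
    have h1' : μ {ω | X₁ ω = x ∧ U ω = u} ≤ ∑ z, μ {ω | X₁ ω = x ∧ U ω = u ∧ X₂ ω = z} := by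
      refine (measure_mono hcover).trans ?_
      refine (measure_iUnion_le _).trans ?_
      rw [tsum_fintype]
    rw [hX₁U x u] at h1'
    calc c = cE.toReal := hcE_toReal.symm
      _ ≤ (∑ z, μ {ω | X₁ ω = x ∧ U ω = u ∧ X₂ ω = z}).toReal := by
          refine ENNReal.toReal_mono ?_ h1'
          exact (ENNReal.sum_lt_top.mpr fun z _ => (measure_ne_top μ _).lt_top).ne
      _ = ∑ z, p x u z := by
          rw [ENNReal.toReal_sum]
          intro z _; exact measure_ne_top μ _
  -- entropy of (X₁,U)
  have hentXU : ent μ (fun ω => (X₁ ω, U ω)) = L := by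
    rw [ent, Fintype.sum_prod_type]
    simp only [pair_preimage, hX₁U, hcE_toReal]
    simp only [Finset.sum_const, Finset.card_univ, Fintype.card_fin, ZMod.card, nsmul_eq_mul]
    rw [hnmc]
    push_cast
    linear_combination L * h2kc
  -- rewriting the three triple entropies
  have hsetA : ∀ (z : β) (x : Fin k) (u : ZMod 2),
      (fun ω => (X₂ ω, (X₁ ω, U ω))) ⁻¹' {(z, (x, u))} = {ω | X₁ ω = x ∧ U ω = u ∧ X₂ ω = z} := by
    intro z x u; ext ω; simp only [Set.mem_preimage, Set.mem_singleton_iff, Prod.ext_iff,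
      Set.mem_setOf_eq]; tauto
  have hsetB : ∀ (u : ZMod 2) (x : Fin k) (z : β),
      (fun ω => (U ω, (X₁ ω, X₂ ω))) ⁻¹' {(u, (x, z))} = {ω | X₁ ω = x ∧ U ω = u ∧ X₂ ω = z} := by
    intro u x z; ext ω; simp only [Set.mem_preimage, Set.mem_singleton_iff, Prod.ext_iff,
      Set.mem_setOf_eq]; tauto
  have hsetC : ∀ (x : Fin k) (z : β) (u : ZMod 2),
      (fun ω => (X₁ ω, (X₂ ω, U ω))) ⁻¹' {(x, (z, u))} = {ω | X₁ ω = x ∧ U ω = u ∧ X₂ ω = z} := by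
    intro x z u; ext ω; simp only [Set.mem_preimage, Set.mem_singleton_iff, Prod.ext_iff,
      Set.mem_setOf_eq]; tauto
  have hE2 : ent μ (fun ω => (X₂ ω, (X₁ ω, U ω)))
      = ∑ x, ∑ u, ∑ z, Real.negMulLog (p x u z) := by
    rw [ent]
    simp only [Fintype.sum_prod_type, hsetA, hpdef]
    rw [Finset.sum_comm]
    exact Finset.sum_congr rfl fun x _ => Finset.sum_comm ..
  have hE1 : ent μ (fun ω => (U ω, (X₁ ω, X₂ ω)))
      = ∑ x, ∑ u, ∑ z, Real.negMulLog (p x u z) := by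
    rw [ent]
    simp only [Fintype.sum_prod_type, hsetB, hpdef]
    rw [Finset.sum_comm]
  have hE3 : ent μ (fun ω => (X₁ ω, (X₂ ω, U ω)))
      = ∑ x, ∑ u, ∑ z, Real.negMulLog (p x u z) := by
    rw [ent]
    simp only [Fintype.sum_prod_type, hsetC, hpdef]
    exact Finset.sum_congr rfl fun x _ => Finset.sum_comm ..
  -- from h2 : the triple entropy equals L
  have hS : ∑ x, ∑ u, ∑ z, Real.negMulLog (p x u z) = L := by
    simp only [condEnt] at h2
    rw [hE2] at h2
    linarith [hentXU]
  -- analysis: each cell is 0 or c, and each (x,u) group sums to c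
  have hterm_ge : ∀ x u z, L * p x u z ≤ Real.negMulLog (p x u z) := by
    intro x u z; rw [hLdef]; exact aux_le c _ (hp0 x u z) (hpc x u z)
  have hsum_ge : 1 ≤ ∑ x, ∑ u, ∑ z, p x u z := by
    have h' : ∑ x : Fin k, ∑ u : ZMod 2, c ≤ ∑ x, ∑ u, ∑ z, p x u z :=
      Finset.sum_le_sum fun x _ => Finset.sum_le_sum fun u _ => hplow x u
    have hcc : ∑ x : Fin k, ∑ u : ZMod 2, c = (k : ℝ) * (2 * c) := by
      simp [Finset.sum_const, Finset.card_univ, ZMod.card]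
      try ring
    linarith
  have hsum_le : ∑ x, ∑ u, ∑ z, p x u z ≤ 1 := by
    have h' : L * (∑ x, ∑ u, ∑ z, p x u z) ≤ L := by
      calc L * (∑ x, ∑ u, ∑ z, p x u z) = ∑ x, ∑ u, ∑ z, L * p x u z := by
            simp [Finset.mul_sum]
        _ ≤ ∑ x, ∑ u, ∑ z, Real.negMulLog (p x u z) :=
            Finset.sum_le_sum fun x _ => Finset.sum_le_sum fun u _ =>
              Finset.sum_le_sum fun z _ => hterm_ge x u z
        _ = L := hS
    nlinarith
  have hsum1 : ∑ x, ∑ u, ∑ z, p x u z = 1 := le_antisymm hsum_le hsum_ge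
  have hp_eqterm : ∀ x u z, Real.negMulLog (p x u z) = L * p x u z := by
    have hmul : ∑ x, ∑ u, ∑ z, L * p x u z = L := by
      simp only [← Finset.mul_sum, hsum1, mul_one]
    have h0 : ∑ x, ∑ u, ∑ z, (Real.negMulLog (p x u z) - L * p x u z) = 0 := by
      simp only [Finset.sum_sub_distrib]
      rw [hS, hmul]
      ring
    intro x u z
    have := sum3_zero _ (fun a b c' => sub_nonneg.mpr (hterm_ge a b c')) h0 x u z
    linarith
  have hp_dich : ∀ x u z, p x u z = 0 ∨ p x u z = c := by
    intro x u z
    have h := hp_eqterm x u z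
    rw [hLdef] at h
    exact aux_eq c _ hc (hp0 x u z) h
  have hgroup : ∀ x u, ∑ z, p x u z = c := by
    have hcc : ∑ x : Fin k, ∑ u : ZMod 2, c = 1 := by
      simp [Finset.sum_const, Finset.card_univ, ZMod.card]
      try linarith [h2kc]
    have h0 : ∑ x, ∑ u, ((∑ z, p x u z) - c) = 0 := by
      simp only [Finset.sum_sub_distrib]
      rw [hsum1, hcc]
      ring
    intro x u
    have := sum2_zero _ (fun a b => sub_nonneg.mpr (hplow a b)) h0 x u
    linarith
  -- the function f : X₂ = f(X₁, U)
  have hex : ∀ x u, ∃ z, p x u z ≠ 0 := by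
    intro x u
    by_contra hcon
    push_neg at hcon
    have : ∑ z, p x u z = 0 := Finset.sum_eq_zero fun z _ => hcon z
    rw [hgroup x u] at this
    exact absurd this (ne_of_gt hc)
  choose f hfne using hex
  have hfc : ∀ x u, p x u (f x u) = c := by
    intro x u
    rcases hp_dich x u (f x u) with h | h
    · exact absurd h (hfne x u)
    · exact h
  have hf0 : ∀ x u z, z ≠ f x u → p x u z = 0 := by
    intro x u z hz
    by_contra hcon
    have hzc : p x u z = c := (hp_dich x u z).resolve_left hcon
    have hsub : p x u z + p x u (f x u) ≤ ∑ z', p x u z' := by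
      have := Finset.sum_le_sum_of_subset_of_nonneg
        (Finset.subset_univ ({z, f x u} : Finset β)) (fun i _ _ => hp0 x u i)
      rwa [Finset.sum_pair hz] at this
    rw [hgroup x u, hzc, hfc x u] at hsub
    linarith
  -- ENNReal versions
  have hT : ∀ x u, μ {ω | X₁ ω = x ∧ U ω = u ∧ X₂ ω = f x u} = cE := by
    intro x u
    have := hfc x u
    rw [hpdef] at this
    exact (ENNReal.toReal_eq_toReal_iff' (measure_ne_top μ _) hcE_top).mp
      (this.trans hcE_toReal.symm)
  have hT0 : ∀ x u z, z ≠ f x u → μ {ω | X₁ ω = x ∧ U ω = u ∧ X₂ ω = z} = 0 := by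
    intro x u z hz
    have h := hf0 x u z hz
    rw [hpdef] at h
    rcases ENNReal.toReal_eq_zero_iff _ |>.mp h with h' | h'
    · exact h'
    · exact absurd h' (measure_ne_top μ _)
  -- the pair measures σ
  set sg : Fin k → β → ℝ := fun x z => (μ {ω | X₁ ω = x ∧ X₂ ω = z}).toReal with hsgdef
  have hsg0 : ∀ x z, 0 ≤ sg x z := fun x z => ENNReal.toReal_nonneg
  have hzmod : ∀ v : ZMod 2, v = 0 ∨ v = 1 := by decide
  have hsg_lower : ∀ x u, c ≤ sg x (f x u) := by
    intro x u
    rw [hsgdef, ← hcE_toReal]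
    refine ENNReal.toReal_mono (measure_ne_top μ _) ?_
    rw [← hT x u]
    exact measure_mono fun ω hω => ⟨hω.1, hω.2.2⟩
  have hsg_upper : ∀ x z, sg x z ≤ p x 0 z + p x 1 z := by
    intro x z
    have hcover : {ω | X₁ ω = x ∧ X₂ ω = z}
        ⊆ {ω | X₁ ω = x ∧ U ω = 0 ∧ X₂ ω = z} ∪ {ω | X₁ ω = x ∧ U ω = 1 ∧ X₂ ω = z} := by
      intro ω hω
      rcases hzmod (U ω) with h | h
      · exact Or.inl ⟨hω.1, h, hω.2⟩
      · exact Or.inr ⟨hω.1, h, hω.2⟩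
    have hm : μ {ω | X₁ ω = x ∧ X₂ ω = z}
        ≤ μ {ω | X₁ ω = x ∧ U ω = 0 ∧ X₂ ω = z} + μ {ω | X₁ ω = x ∧ U ω = 1 ∧ X₂ ω = z} :=
      (measure_mono hcover).trans (measure_union_le _ _)
    rw [hsgdef, hpdef]
    calc (μ {ω | X₁ ω = x ∧ X₂ ω = z}).toReal
        ≤ (μ {ω | X₁ ω = x ∧ U ω = 0 ∧ X₂ ω = z} + μ {ω | X₁ ω = x ∧ U ω = 1 ∧ X₂ ω = z}).toReal := by
          refine ENNReal.toReal_mono ?_ hm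
          exact ENNReal.add_ne_top.mpr ⟨measure_ne_top μ _, measure_ne_top μ _⟩
      _ = _ := ENNReal.toReal_add (measure_ne_top μ _) (measure_ne_top μ _)
  have hsg_zero : ∀ x z, z ≠ f x 0 → z ≠ f x 1 → sg x z = 0 := by
    intro x z h0' h1'
    have := hsg_upper x z
    rw [hf0 x 0 z h0', hf0 x 1 z h1'] at this
    linarith [hsg0 x z]
  have hsg_dich0 : ∀ x z, sg x z = 0 ∨ c ≤ sg x z := by
    intro x z
    by_cases h0' : z = f x 0
    · exact Or.inr (h0' ▸ hsg_lower x 0)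
    · by_cases h1' : z = f x 1
      · exact Or.inr (h1' ▸ hsg_lower x 1)
      · exact Or.inl (hsg_zero x z h0' h1')
  have hsgsum_le : ∑ x, ∑ z, sg x z ≤ 1 := by
    have h' : ∑ x : Fin k, ∑ z : β, sg x z ≤ ∑ x : Fin k, ∑ z : β, (p x 0 z + p x 1 z) :=
      Finset.sum_le_sum fun x _ => Finset.sum_le_sum fun z _ => hsg_upper x z
    have h'' : ∑ x : Fin k, ∑ z : β, (p x 0 z + p x 1 z) = 1 := by
      have : ∀ x : Fin k, ∑ z : β, (p x 0 z + p x 1 z) = 2 * c := by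
        intro x
        rw [Finset.sum_add_distrib, hgroup x 0, hgroup x 1]
        ring
      rw [Finset.sum_congr rfl fun x _ => this x, Finset.sum_const, Finset.card_univ,
        Fintype.card_fin, nsmul_eq_mul]
      linarith [h2kc]
    linarith
  -- entropy of (X₁, X₂) equals L (uses h1)
  have hSsg : ∑ x, ∑ z, Real.negMulLog (sg x z) = L := by
    simp only [condEnt] at h1
    rw [hE1] at h1
    have hpair : ent μ (fun ω => (X₁ ω, X₂ ω)) = ∑ x, ∑ z, Real.negMulLog (sg x z) := by
      rw [ent]
      simp only [Fintype.sum_prod_type, pair_preimage, hsgdef]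
    rw [hpair] at h1
    linarith [hS]
  -- second analysis : every pair cell is 0 or c, and total is 1
  have hsg_le_term : ∀ x z, Real.negMulLog (sg x z) ≤ L * sg x z := by
    intro x z; rw [hLdef]; exact aux_ge c _ hc (hsg_dich0 x z)
  have hsgsum1 : ∑ x, ∑ z, sg x z = 1 := by
    have h' : L ≤ L * (∑ x, ∑ z, sg x z) := by
      calc L = ∑ x, ∑ z, Real.negMulLog (sg x z) := hSsg.symm
        _ ≤ ∑ x, ∑ z, L * sg x z :=
            Finset.sum_le_sum fun x _ => Finset.sum_le_sum fun z _ => hsg_le_term x z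
        _ = L * (∑ x, ∑ z, sg x z) := by simp [Finset.mul_sum]
    nlinarith
  have hsg_eqterm : ∀ x z, Real.negMulLog (sg x z) = L * sg x z := by
    have hmul : ∑ x, ∑ z, L * sg x z = L := by
      simp only [← Finset.mul_sum, hsgsum1, mul_one]
    have h0 : ∑ x, ∑ z, (L * sg x z - Real.negMulLog (sg x z)) = 0 := by
      simp only [Finset.sum_sub_distrib]
      rw [hSsg, hmul]
      ring
    intro x z
    have := sum2_zero _ (fun a b => sub_nonneg.mpr (hsg_le_term a b)) h0 x z
    linarith
  have hsg_dich : ∀ x z, sg x z = 0 ∨ sg x z = c := by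
    intro x z
    have h := (hsg_eqterm x z).symm
    rw [hLdef] at h
    exact aux_eq c _ hc (hsg0 x z) h.symm
  -- conclusion 3
  have hedge : ∀ x z, μ {ω | X₁ ω = x ∧ X₂ ω = z} ≠ 0 ↔ sg x z ≠ 0 := by
    intro x z
    rw [hsgdef]
    simp only [ne_eq, ENNReal.toReal_eq_zero_iff, measure_ne_top μ _, or_false]
  have hconc3 : ∀ (x : Fin k) (z : β), μ {ω | X₁ ω = x ∧ X₂ ω = z} ≠ 0 →
      μ {ω | X₁ ω = x ∧ X₂ ω = z} = cE := by
    intro x z hne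
    have hsgne : sg x z ≠ 0 := (hedge x z).mp hne
    have hsgc : sg x z = c := (hsg_dich x z).resolve_left hsgne
    rw [hsgdef] at hsgc
    exact (ENNReal.toReal_eq_toReal_iff' (measure_ne_top μ _) hcE_top).mp (hsgc.trans hcE_toReal.symm)
  -- left degrees
  set deg : Fin k → ℕ := fun x => (Finset.univ.filter fun z => sg x z ≠ 0).card with hdegdef
  have hdeg_le : ∀ x, deg x ≤ 2 := by
    intro x
    have hsub : (Finset.univ.filter fun z => sg x z ≠ 0) ⊆ {f x 0, f x 1} := by
      intro z hz
      simp only [Finset.mem_filter] at hz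
      by_contra hmem
      simp only [Finset.mem_insert, Finset.mem_singleton] at hmem
      push_neg at hmem
      exact hz.2 (hsg_zero x z hmem.1 hmem.2)
    calc deg x ≤ ({f x 0, f x 1} : Finset β).card := Finset.card_le_card hsub
      _ ≤ 2 := (Finset.card_insert_le _ _).trans (by simp)
  have hdegsum : ∑ x, deg x = 2 * k := by
    have hre : ∀ x, ∑ z, sg x z = (deg x : ℝ) * c := by
      intro x
      rw [← Finset.sum_filter_ne_zero]
      rw [Finset.sum_congr rfl
        (fun z hz => ((hsg_dich x z).resolve_left (Finset.mem_filter.mp hz).2 : sg x z = c))]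
      rw [Finset.sum_const, nsmul_eq_mul, hdegdef]
    have hone : ∑ x, (deg x : ℝ) * c = 1 := by
      calc ∑ x, (deg x : ℝ) * c = ∑ x, ∑ z, sg x z :=
            Finset.sum_congr rfl fun x _ => (hre x).symm
        _ = 1 := hsgsum1
    have hA : ((∑ x, deg x : ℕ) : ℝ) = ∑ x, (deg x : ℝ) := by push_cast; rfl
    have hB : (∑ x, (deg x : ℝ)) * c = 1 := by
      rw [Finset.sum_mul]; exact hone
    have hC : ((2 * k : ℕ) : ℝ) * c = 1 := by
      rw [hcdef]
      field_simp
    have hfin : ((∑ x, deg x : ℕ) : ℝ) = ((2 * k : ℕ) : ℝ) := by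
      rw [hA]
      exact mul_right_cancel₀ (ne_of_gt hc) (hB.trans hC.symm)
    exact_mod_cast hfin
  have hdeg2 : ∀ x, deg x = 2 := by
    intro x0
    by_contra hne
    have hlt : deg x0 < 2 := lt_of_le_of_ne (hdeg_le x0) hne
    have hstrict : ∑ x, deg x < ∑ _x : Fin k, 2 :=
      Finset.sum_lt_sum (fun x _ => hdeg_le x) ⟨x0, Finset.mem_univ x0, hlt⟩
    rw [hdegsum] at hstrict
    simp [Finset.sum_const, Finset.card_univ] at hstrict
    omega
  have hconc1 : ∀ x, Set.ncard {z | μ {ω | X₁ ω = x ∧ X₂ ω = z} ≠ 0} = 2 := by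
    intro x
    have hseteq : {z | μ {ω | X₁ ω = x ∧ X₂ ω = z} ≠ 0}
        = ↑(Finset.univ.filter fun z => sg x z ≠ 0) := by
      ext z
      simp [hedge x z]
    rw [hseteq, Set.ncard_coe_finset]
    exact hdeg2 x
  -- part 2 : right degrees, via h3
  set w : β → ZMod 2 → ℝ := fun z u => (μ {ω | X₂ ω = z ∧ U ω = u}).toReal with hwdef
  have hw0 : ∀ z u, 0 ≤ w z u := fun z u => ENNReal.toReal_nonneg
  set m : β → ZMod 2 → ℕ := fun z u => (Finset.univ.filter fun x => f x u = z).card with hmdef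
  have hpsum_fiber : ∀ z u, ∑ x, p x u z = (m z u : ℝ) * c := by
    intro z u
    have hterm : ∀ x : Fin k, p x u z = if f x u = z then c else 0 := by
      intro x
      by_cases hx : f x u = z
      · rw [if_pos hx, ← hx]
        exact hfc x u
      · rw [if_neg hx]
        exact hf0 x u z (fun h => hx h.symm)
    rw [Finset.sum_congr rfl fun x _ => hterm x, ← Finset.sum_filter,
      Finset.sum_const, nsmul_eq_mul, hmdef]
  have hw_up : ∀ z u, w z u ≤ (m z u : ℝ) * c := by
    intro z u
    have hcover : {ω | X₂ ω = z ∧ U ω = u} ⊆ ⋃ x, {ω | X₁ ω = x ∧ U ω = u ∧ X₂ ω = z} := by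
      intro ω hω
      exact Set.mem_iUnion.mpr ⟨X₁ ω, rfl, hω.2, hω.1⟩
    have hm' : μ {ω | X₂ ω = z ∧ U ω = u} ≤ ∑ x, μ {ω | X₁ ω = x ∧ U ω = u ∧ X₂ ω = z} :=
      (measure_mono hcover).trans ((measure_iUnion_le _).trans (by rw [tsum_fintype]))
    have hup : w z u ≤ ∑ x, p x u z := by
      rw [hwdef, hpdef]
      calc (μ {ω | X₂ ω = z ∧ U ω = u}).toReal
          ≤ (∑ x, μ {ω | X₁ ω = x ∧ U ω = u ∧ X₂ ω = z}).toReal := by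
            refine ENNReal.toReal_mono ?_ hm'
            exact (ENNReal.sum_lt_top.mpr fun x _ => (measure_ne_top μ _).lt_top).ne
        _ = ∑ x, (μ {ω | X₁ ω = x ∧ U ω = u ∧ X₂ ω = z}).toReal :=
            ENNReal.toReal_sum fun x _ => measure_ne_top μ _
    rw [← hpsum_fiber z u]
    exact hup
  have hw_low : ∀ z u (x : Fin k), f x u = z → c ≤ w z u := by
    intro z u x hx
    rw [hwdef, ← hcE_toReal]
    refine ENNReal.toReal_mono (measure_ne_top μ _) ?_
    rw [← hT x u]
    exact measure_mono fun ω hω => ⟨hω.2.2.trans hx, hω.2.1⟩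
  have hw_dich0 : ∀ z u, w z u = 0 ∨ c ≤ w z u := by
    intro z u
    by_cases hm0 : m z u = 0
    · left
      have h' := hw_up z u
      rw [hm0] at h'
      simp only [Nat.cast_zero, zero_mul] at h'
      linarith [hw0 z u]
    · right
      obtain ⟨x, hx⟩ := Finset.card_pos.mp (Nat.pos_of_ne_zero (by rw [hmdef] at hm0; exact hm0))
      exact hw_low z u x (Finset.mem_filter.mp hx).2
  have hmsum : ∑ z : β, ∑ u : ZMod 2, (m z u : ℝ) * c = 1 := by
    have hcnt : ∀ u : ZMod 2, ∑ z : β, (m z u : ℕ) = k := by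
      intro u
      rw [hmdef]
      have hfib := Finset.card_eq_sum_card_fiberwise
        (f := fun x : Fin k => f x u) (s := Finset.univ) (t := Finset.univ)
        (fun x _ => Finset.mem_univ _)
      rw [Finset.card_univ, Fintype.card_fin] at hfib
      exact hfib.symm
    rw [Finset.sum_comm]
    rw [sum_zmod2 (fun u => ∑ z : β, (m z u : ℝ) * c)]
    have hcast : ∀ u : ZMod 2, ∑ z : β, (m z u : ℝ) * c = (k : ℝ) * c := by
      intro u
      rw [← Finset.sum_mul]
      congr 1
      rw [← Nat.cast_sum]
      exact_mod_cast congrArg (fun n : ℕ => (n : ℝ)) (hcnt u)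
    rw [hcast 0, hcast 1]
    linarith [h2kc]
  have hwsum_le : ∑ z, ∑ u, w z u ≤ 1 := by
    have h' : ∑ z : β, ∑ u : ZMod 2, w z u ≤ ∑ z : β, ∑ u : ZMod 2, (m z u : ℝ) * c :=
      Finset.sum_le_sum fun z _ => Finset.sum_le_sum fun u _ => hw_up z u
    linarith [hmsum]
  have hSw : ∑ z, ∑ u, Real.negMulLog (w z u) = L := by
    simp only [condEnt] at h3
    rw [hE3] at h3
    have hpair : ent μ (fun ω => (X₂ ω, U ω)) = ∑ z, ∑ u, Real.negMulLog (w z u) := by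
      rw [ent]
      simp only [Fintype.sum_prod_type, pair_preimage, hwdef]
    rw [hpair] at h3
    linarith [hS]
  have hw_le_term : ∀ z u, Real.negMulLog (w z u) ≤ L * w z u := by
    intro z u
    rw [hLdef]
    exact aux_ge c _ hc (hw_dich0 z u)
  have hwsum1 : ∑ z, ∑ u, w z u = 1 := by
    have h' : L ≤ L * (∑ z, ∑ u, w z u) := by
      calc L = ∑ z, ∑ u, Real.negMulLog (w z u) := hSw.symm
        _ ≤ ∑ z, ∑ u, L * w z u :=
            Finset.sum_le_sum fun z _ => Finset.sum_le_sum fun u _ => hw_le_term z u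
        _ = L * (∑ z, ∑ u, w z u) := by simp [Finset.mul_sum]
    nlinarith [hwsum_le]
  have hw_eqterm : ∀ z u, Real.negMulLog (w z u) = L * w z u := by
    have hmul : ∑ z, ∑ u, L * w z u = L := by
      simp only [← Finset.mul_sum, hwsum1, mul_one]
    have h0 : ∑ z, ∑ u, (L * w z u - Real.negMulLog (w z u)) = 0 := by
      simp only [Finset.sum_sub_distrib]
      rw [hSw, hmul]
      ring
    intro z u
    have := sum2_zero _ (fun a b => sub_nonneg.mpr (hw_le_term a b)) h0 z u
    linarith
  have hw_dich : ∀ z u, w z u = 0 ∨ w z u = c := by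
    intro z u
    have h := hw_eqterm z u
    rw [hLdef] at h
    exact aux_eq c _ hc (hw0 z u) h
  have hw_eq : ∀ z u, w z u = (m z u : ℝ) * c := by
    have h0 : ∑ z, ∑ u, ((m z u : ℝ) * c - w z u) = 0 := by
      simp only [Finset.sum_sub_distrib]
      rw [hwsum1, hmsum]
      ring
    intro z u
    have := sum2_zero _ (fun a b => sub_nonneg.mpr (hw_up a b)) h0 z u
    linarith
  have hm_le1 : ∀ z u, m z u ≤ 1 := by
    intro z u
    rcases hw_dich z u with h | h
    · have h' : (m z u : ℝ) * c = 0 := by rw [← hw_eq z u]; exact h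
      have : (m z u : ℝ) = 0 := by
        rcases mul_eq_zero.mp h' with h'' | h''
        · exact h''
        · exact absurd h'' (ne_of_gt hc)
      have : m z u = 0 := by exact_mod_cast this
      omega
    · have h' : (m z u : ℝ) * c = c := by rw [← hw_eq z u]; exact h
      have : (m z u : ℝ) = 1 := by
        have := mul_right_cancel₀ (ne_of_gt hc) (h'.trans (one_mul c).symm)
        exact this
      have : m z u = 1 := by exact_mod_cast this
      omega
  -- right degrees
  set R : β → ℕ := fun z => (Finset.univ.filter fun x => sg x z ≠ 0).card with hRdef
  have hR_le : ∀ z, R z ≤ 2 := by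
    intro z
    have hsub : (Finset.univ.filter fun x => sg x z ≠ 0)
        ⊆ (Finset.univ.filter fun x => f x 0 = z) ∪ (Finset.univ.filter fun x => f x 1 = z) := by
      intro x hx
      simp only [Finset.mem_filter] at hx
      rcases (by
        by_contra hcon
        push_neg at hcon
        exact hx.2 (hsg_zero x z (fun h => hcon.1 h.symm) (fun h => hcon.2 h.symm)) :
          f x 0 = z ∨ f x 1 = z) with h | h
      · exact Finset.mem_union_left _ (Finset.mem_filter.mpr ⟨Finset.mem_univ _, h⟩)
      · exact Finset.mem_union_right _ (Finset.mem_filter.mpr ⟨Finset.mem_univ _, h⟩)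
    calc R z ≤ _ := Finset.card_le_card hsub
      _ ≤ (Finset.univ.filter fun x : Fin k => f x 0 = z).card
          + (Finset.univ.filter fun x : Fin k => f x 1 = z).card := Finset.card_union_le _ _
      _ ≤ 2 := by
          have h0' := hm_le1 z 0
          have h1' := hm_le1 z 1
          simp only [hmdef] at h0' h1'
          omega
  have hRsum : ∑ z, R z = 2 * k := by
    have hcomm : ∑ z, R z = ∑ x, deg x := by
      simp only [hRdef, hdegdef, Finset.card_filter]
      exact Finset.sum_comm ..
    rw [hcomm, hdegsum]
  set Sup : Finset β := Finset.univ.filter (fun z => μ (X₂ ⁻¹' {z}) ≠ 0) with hSupdef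
  have hSupcard : Sup.card ≤ k := by
    have hset : {z | μ (X₂ ⁻¹' {z}) ≠ 0} = ↑Sup := by
      ext z
      simp [hSupdef]
    rw [hset, Set.ncard_coe_finset] at hsupp
    exact hsupp
  have hznot : ∀ z, z ∉ Sup → R z = 0 := by
    intro z hz
    have hz0 : μ (X₂ ⁻¹' {z}) = 0 := by
      by_contra hcon
      exact hz (Finset.mem_filter.mpr ⟨Finset.mem_univ _, hcon⟩)
    rw [hRdef]
    rw [Finset.card_eq_zero, Finset.filter_eq_empty_iff]
    intro x _
    have hμ0 : μ {ω | X₁ ω = x ∧ X₂ ω = z} = 0 := by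
      have hsub : {ω | X₁ ω = x ∧ X₂ ω = z} ⊆ X₂ ⁻¹' {z} := fun ω hω => hω.2
      exact le_antisymm (hz0 ▸ measure_mono hsub) zero_le
    simp only [ne_eq, not_not, hsgdef, hμ0, ENNReal.toReal_zero]
  have hRSup : ∑ z ∈ Sup, R z = 2 * k := by
    rw [← hRsum]
    exact Finset.sum_subset (Finset.subset_univ _) (fun z _ hz => hznot z hz)
  have hR2 : ∀ z ∈ Sup, R z = 2 := by
    intro z0 hz0
    by_contra hne
    have hlt : R z0 < 2 := lt_of_le_of_ne (hR_le z0) hne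
    have hstrict : ∑ z ∈ Sup, R z < ∑ _z ∈ Sup, 2 :=
      Finset.sum_lt_sum (fun z _ => hR_le z) ⟨z0, hz0, hlt⟩
    rw [hRSup, Finset.sum_const, smul_eq_mul] at hstrict
    omega
  refine ⟨hconc1, ?_, hconc3⟩
  intro z hz
  have hzS : z ∈ Sup := Finset.mem_filter.mpr ⟨Finset.mem_univ _, hz⟩
  have hseteq : {x : Fin k | μ {ω | X₁ ω = x ∧ X₂ ω = z} ≠ 0}
      = ↑(Finset.univ.filter fun x => sg x z ≠ 0) := by
    ext x
    simp [hedge x z]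
  rw [hseteq, Set.ncard_coe_finset]
  exact hR2 z hzS
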